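/- Let m₀, m₁ > 0, σ₀ = m₀/(m₀+m₁), σ₁ = m₁/(m₀+m₁), μ₁ = m₀m₁/(m₀+m₁), and m₂ > 0. For Q₁, Q₂ ∈ ℝ³ with Q₂ ≠ 0, Q₂ − σ₀Q₁ ≠ 0, Q₂ + σ₁Q₁ ≠ 0, and ‖Q₁‖/‖Q₂‖ < min(1/(2σ₀), 1/(2σ₁)), the perturbing function F_pert = −μ₁ m₂ [ (1/σ₀)(1/‖Q₂−σ₀Q₁‖ − 1/‖Q₂‖) + (1/σ₁)(1/‖Q₂+σ₁Q₁‖ − 1/‖Q₂‖) ] equals the convergent series −μ₁ m₂ ∑_{n≥2} σ_n P_n(cos ζ) ‖Q₁‖^n/‖Q₂‖^{n+1}, where σ_n = σ₀^{n−1} + (−1)^n σ₁^{n−1} and ζ is the angle between Q₁ and Q₂. -/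

import Mathlib

noncomputable def legendreP : ℕ → ℝ → ℝ
  | 0, _ => 1
  | 1, x => x
  | (n + 2), x =>
      ((2 * (n + 1) + 1) * x * legendreP (n + 1) x - (n + 1) * legendreP n x) / (n + 2)

open Finset Complex

noncomputable def aa : ℕ → ℝ
  | 0 => 1
  | (n+1) => aa n * (2*n+1) / (2*n+2)

lemma aa_pos (n : ℕ) : 0 < aa n := by
  induction n with
  | zero => norm_num [aa]
  | succ n ih => rw [aa]; positivity

lemma aa_rec (n : ℕ) : (2*(n:ℝ)+2) * aa (n+1) = (2*n+1) * aa n := by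
  rw [aa]; field_simp

lemma aa_le_one (n : ℕ) : aa n ≤ 1 := by
  induction n with
  | zero => norm_num [aa]
  | succ n ih =>
    rw [aa]
    rw [div_le_one (by positivity)]
    nlinarith [aa_pos n]

lemma aa_vandermonde (n : ℕ) : ∑ k ∈ range (n+1), aa k * aa (n-k) = 1 := by
  induction n with
  | zero => simp [aa]
  | succ n ih =>
    have hT : ∀ m : ℕ, ∑ k ∈ range (m+1), ((2*(k:ℝ)+1)) * (aa k * aa (m-k))
        = ((m:ℝ)+1) * ∑ k ∈ range (m+1), aa k * aa (m-k) := by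
      intro m
      have hrefl := (Finset.sum_range_reflect
        (fun k => ((2*(k:ℝ)+1)) * (aa k * aa (m-k))) (m+1)).symm
      simp only [Nat.add_sub_cancel] at hrefl
      have h2 : ∑ k ∈ range (m+1), (((2*(k:ℝ)+1)) * (aa k * aa (m-k))
            + ((2*((m-k : ℕ):ℝ)+1)) * (aa (m-k) * aa (m-(m-k))))
          = ∑ k ∈ range (m+1), (2*(m:ℝ)+2) * (aa k * aa (m-k)) := by
        apply Finset.sum_congr rfl
        intro k hk
        simp only [mem_range] at hk
        have hk' : k ≤ m := Nat.lt_succ_iff.mp hk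
        rw [show m - (m - k) = k by omega, Nat.cast_sub hk']
        ring
      rw [Finset.sum_add_distrib, ← hrefl, ← Finset.mul_sum] at h2
      nlinarith [h2]
    have hTU : ∑ k ∈ range (n+1), ((2*(k:ℝ)+1)) * (aa k * aa (n-k))
        = ∑ j ∈ range (n+2), 2*(j:ℝ) * (aa j * aa (n+1-j)) := by
      rw [Finset.sum_range_succ' (fun j => 2*(j:ℝ) * (aa j * aa (n+1-j))) (n+1)]
      simp only [Nat.cast_zero, mul_zero, zero_mul, add_zero]
      apply Finset.sum_congr rfl
      intro k hk
      simp only [mem_range] at hk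
      rw [show n + 1 - (k+1) = n - k by omega]
      push_cast
      linear_combination (-aa (n-k)) * (aa_rec k)
    have hsplit : ∑ k ∈ range (n+2), ((2*(k:ℝ)+1)) * (aa k * aa (n+1-k))
        = ∑ k ∈ range (n+2), 2*(k:ℝ) * (aa k * aa (n+1-k))
          + ∑ k ∈ range (n+2), aa k * aa (n+1-k) := by
      rw [← Finset.sum_add_distrib]
      apply Finset.sum_congr rfl
      intro k _; ring
    have e1 := hT (n+1)
    have e2 := hT n
    rw [hsplit] at e1
    rw [← hTU, e2, ih, mul_one] at e1
    push_cast at e1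
    have hne : ((n:ℝ)+1) ≠ 0 := by positivity
    have : ((n:ℝ)+1) * ∑ k ∈ range (n+2), aa k * aa (n+1-k) = ((n:ℝ)+1) * 1 := by
      push_cast
      linarith [e1]
    exact mul_left_cancel₀ hne this


section CC
variable (x : ℝ)

noncomputable def uu : ℂ := ⟨x, Real.sqrt (1 - x^2)⟩

noncomputable def CC (n : ℕ) : ℂ :=
  ∑ k ∈ range (n+1), (aa k * aa (n-k) : ℝ) * (uu x)^k * ((starRingEnd ℂ) (uu x))^(n-k)

variable (hx : |x| ≤ 1)
include hx

lemma uu_mul_conj : uu x * (starRingEnd ℂ) (uu x) = 1 := by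
  rw [Complex.mul_conj]
  have h1 : (0:ℝ) ≤ 1 - x^2 := by nlinarith [abs_le.mp hx]
  have : Complex.normSq (uu x) = 1 := by
    simp [Complex.normSq_mk, uu, Real.sq_sqrt h1, Real.sqrt_sq_eq_abs]
    nlinarith [Real.sq_sqrt h1]
  rw [this]; simp

lemma uu_add_conj : uu x + (starRingEnd ℂ) (uu x) = 2 * x := by
  rw [Complex.add_conj]
  simp [uu]

lemma CC_rec (n : ℕ) :
    ((n:ℂ)+2) * CC x (n+2) = (2*(n:ℂ)+3) * (x:ℂ) * CC x (n+1) - ((n:ℂ)+1) * CC x n := by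
  set u := uu x with hu
  set v := (starRingEnd ℂ) (uu x) with hv
  have huv : u * v = 1 := uu_mul_conj x hx
  have hsum : u + v = 2 * (x:ℂ) := uu_add_conj x hx
  set e : ℕ → ℂ := fun j => u^j * v^(n+2-j) with he
  -- C (n+2) as sum of e j
  have hC2 : ((n:ℂ)+2) * CC x (n+2) = ∑ j ∈ range (n+3),
      ((((n:ℝ)+2) * (aa j * aa (n+2-j)) : ℝ) : ℂ) * e j := by
    rw [CC, Finset.mul_sum]
    apply Finset.sum_congr rfl
    intro j hj
    push_cast
    ring
  -- x * C (n+1)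
  have hxC1 : (2*(n:ℂ)+3) * (x:ℂ) * CC x (n+1)
      = ∑ k ∈ range (n+2), (((2*(n:ℝ)+3)/2 * (aa k * aa (n+1-k)) : ℝ):ℂ) * e (k+1)
        + ∑ k ∈ range (n+2), (((2*(n:ℝ)+3)/2 * (aa k * aa (n+1-k)) : ℝ):ℂ) * e k := by
    have hx2 : (x:ℂ) = (u + v)/2 := by rw [hsum]; ring
    rw [CC, hx2, Finset.mul_sum, ← Finset.sum_add_distrib]
    apply Finset.sum_congr rfl
    intro k hk
    simp only [mem_range] at hk
    have h1 : e (k+1) = u^(k+1) * v^(n+1-k) := by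
      simp only [he]; rw [show n+2-(k+1) = n+1-k by omega]
    have h2 : e k = u^k * v^(n+2-k) := rfl
    have h3 : v^(n+2-k) = v^(n+1-k) * v := by
      rw [← pow_succ]; congr 1; omega
    have h4 : u^(k+1) = u^k * u := by rw [pow_succ]
    rw [h1, h2, h3, h4]
    push_cast
    ring
  -- C n
  have hCn : ((n:ℂ)+1) * CC x n = ∑ k ∈ range (n+1),
      ((((n:ℝ)+1) * (aa k * aa (n-k)) : ℝ):ℂ) * e (k+1) := by
    rw [CC, Finset.mul_sum]
    apply Finset.sum_congr rfl
    intro k hk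
    simp only [mem_range] at hk
    have h1 : e (k+1) = u^(k+1) * v^(n+1-k) := by
      simp only [he]; rw [show n+2-(k+1) = n+1-k by omega]
    have h2 : v^(n+1-k) = v^(n-k) * v := by
      rw [← pow_succ]; congr 1; omega
    rw [h1, h2, pow_succ]
    have : u^k * u * (v^(n-k) * v) = (u^k * v^(n-k)) * (u * v) := by ring
    rw [this, huv]
    push_cast
    ring
  rw [hC2, hxC1, hCn]
  -- split sums
  rw [Finset.sum_range_succ' (fun j => ((((n:ℝ)+2) * (aa j * aa (n+2-j)) : ℝ) : ℂ) * e j) (n+2)]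
  rw [Finset.sum_range_succ (fun k => ((((n:ℝ)+2) * (aa (k+1) * aa (n+2-(k+1))) : ℝ) : ℂ) * e (k+1)) (n+1)]
  rw [Finset.sum_range_succ (fun k => (((2*(n:ℝ)+3)/2 * (aa k * aa (n+1-k)) : ℝ):ℂ) * e (k+1)) (n+1)]
  rw [Finset.sum_range_succ' (fun k => (((2*(n:ℝ)+3)/2 * (aa k * aa (n+1-k)) : ℝ):ℂ) * e k) (n+1)]
  have hb : ((n:ℝ)+2) * aa (n+2) = (2*(n:ℝ)+3)/2 * aa (n+1) := by
    have := aa_rec (n+1)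
    push_cast at this ⊢
    linarith
  have hmain : ∀ k ∈ range (n+1),
      ((((n:ℝ)+2) * (aa (k+1) * aa (n+2-(k+1))) : ℝ) : ℂ) * e (k+1)
      = (((2*(n:ℝ)+3)/2 * (aa k * aa (n+1-k)) : ℝ):ℂ) * e (k+1)
        + (((2*(n:ℝ)+3)/2 * (aa (k+1) * aa (n+1-(k+1))) : ℝ):ℂ) * e (k+1)
        - ((((n:ℝ)+1) * (aa k * aa (n-k)) : ℝ):ℂ) * e (k+1) := by
    intro k hk
    simp only [mem_range] at hk
    have hk' : k ≤ n := Nat.lt_succ_iff.mp hk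
    rw [show n+2-(k+1) = (n-k)+1 by omega, show n+1-k = (n-k)+1 by omega,
        show n+1-(k+1) = n-k by omega]
    rw [← add_mul, ← sub_mul]
    congr 1
    rw [← Complex.ofReal_add, ← Complex.ofReal_sub, Complex.ofReal_inj]
    set m := n - k with hm
    have hn : (n:ℝ) = (k:ℝ) + (m:ℝ) := by
      have : n = k + m := by omega
      rw [this]; push_cast; ring
    rw [hn]
    have r1 := aa_rec k
    have r2 := aa_rec m
    -- (k+m+2) aa(k+1) aa(m+1) = (2(k+m)+3)/2 (aa k aa (m+1) + aa(k+1) aa m) - (k+m+1) aa k aa m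
    have h2k : (2*(k:ℝ)+2) ≠ 0 := by positivity
    have h2m : (2*(m:ℝ)+2) ≠ 0 := by positivity
    have ek : aa (k+1) = (2*(k:ℝ)+1) * aa k / (2*(k:ℝ)+2) := by
      field_simp; linarith [r1]
    have em : aa (m+1) = (2*(m:ℝ)+1) * aa m / (2*(m:ℝ)+2) := by
      field_simp; linarith [r2]
    rw [ek, em]
    field_simp
    ring
  rw [Finset.sum_congr rfl hmain]
  simp only [Finset.sum_sub_distrib, Finset.sum_add_distrib]
  rw [show n+2-(n+2) = 0 by omega, show n+2-0 = n+2 by omega, show n+1-(n+1) = 0 by omega,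
      show n+1-0 = n+1 by omega]
  have e0 : (((n:ℝ)+2) * (aa 0 * aa (n+2)) : ℝ) = ((2*(n:ℝ)+3)/2 * (aa 0 * aa (n+1)) : ℝ) := by
    rw [show aa 0 = 1 from rfl]; rw [one_mul, one_mul]; exact hb
  have e2 : (((n:ℝ)+2) * (aa (n+2) * aa 0) : ℝ) = ((2*(n:ℝ)+3)/2 * (aa (n+1) * aa 0) : ℝ) := by
    rw [show aa 0 = 1 from rfl]; rw [mul_one, mul_one]; exact hb
  rw [show ((n:ℕ)+1+1) = n+2 from rfl]
  rw [e0, e2]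
  ring
end CC

section CC2
variable (x : ℝ) (hx : |x| ≤ 1)
include hx

lemma CC_zero : CC x 0 = 1 := by
  simp [CC, aa]

lemma CC_one : CC x 1 = (x:ℂ) := by
  have h := uu_add_conj x hx
  simp [CC, aa, Finset.sum_range_succ]
  linear_combination h / 2

lemma CC_eq_legendre : ∀ n, CC x n = ((legendreP n x : ℝ) : ℂ) := by
  intro n
  induction n using Nat.strong_induction_on with
  | _ n ih =>
    match n with
    | 0 => rw [CC_zero x hx]; norm_num [legendreP]
    | 1 => rw [CC_one x hx]; norm_num [legendreP]
    | (n+2) =>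
      have h1 := ih (n+1) (by omega)
      have h0 := ih n (by omega)
      have hr := CC_rec x hx n
      rw [h1, h0] at hr
      have hne : ((n:ℂ)+2) ≠ 0 := by
        intro h
        have : ((n:ℝ)+2) = 0 := by exact_mod_cast congrArg Complex.re h
        nlinarith [(Nat.cast_nonneg n : (0:ℝ) ≤ n)]
      rw [show legendreP (n+2) x
          = ((2*((n:ℝ)+1)+1) * x * legendreP (n+1) x - ((n:ℝ)+1) * legendreP n x)/((n:ℝ)+2)
          from rfl]
      push_cast
      rw [eq_div_iff hne]
      linear_combination hr

end CC2

lemma legendre_hasSum (x r : ℝ) (hx : |x| ≤ 1) (hr : |r| < 1) :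
    HasSum (fun n => legendreP n x * r ^ n)
      (1 / Real.sqrt (1 - 2*x*r + r^2)) := by
  have habs : ‖uu x‖ = 1 := by
    have h := uu_mul_conj x hx
    rw [Complex.mul_conj] at h
    have : (Complex.normSq (uu x) : ℝ) = 1 := by exact_mod_cast h
    rw [← Complex.sq_norm] at this
    nlinarith [norm_nonneg (uu x)]
  set u := uu x with hu
  set v := (starRingEnd ℂ) u with hv
  have hvabs : ‖v‖ = 1 := by rw [hv, Complex.norm_conj]; exact habs
  set f : ℕ → ℂ := fun n => (aa n : ℂ) * u^n * (r:ℂ)^n with hf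
  set g : ℕ → ℂ := fun n => (aa n : ℂ) * v^n * (r:ℂ)^n with hg
  have hnorm : ∀ (w : ℂ), ‖w‖ = 1 →
      ∀ n : ℕ, ‖(aa n : ℂ) * w^n * (r:ℂ)^n‖ ≤ |r|^n := by
    intro w hw n
    simp only [norm_mul, norm_pow, hw, one_pow, Complex.norm_real, Real.norm_eq_abs, mul_one]
    rw [abs_of_pos (aa_pos n)]
    nlinarith [aa_le_one n, aa_pos n, pow_nonneg (abs_nonneg r) n]
  have hsummf : Summable (fun n => ‖f n‖) := by
    apply Summable.of_nonneg_of_le (fun n => norm_nonneg _) (hnorm u habs)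
    exact summable_geometric_of_lt_one (abs_nonneg r) hr
  have hsummg : Summable (fun n => ‖g n‖) := by
    apply Summable.of_nonneg_of_le (fun n => norm_nonneg _) (hnorm v hvabs)
    exact summable_geometric_of_lt_one (abs_nonneg r) hr
  set F := ∑' n, f n with hF
  set G := ∑' n, g n with hG
  have hru : ‖(r:ℂ) * u‖ < 1 := by
    rw [norm_mul, habs, mul_one, Complex.norm_real, Real.norm_eq_abs]
    exact hr
  have hrv : ‖(r:ℂ) * v‖ < 1 := by
    rw [norm_mul, hvabs, mul_one, Complex.norm_real, Real.norm_eq_abs]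
    exact hr
  have cauchy_sq : ∀ (w : ℂ), ‖w‖ = 1 →
      (∑' n, (aa n : ℂ) * w^n * (r:ℂ)^n) * (∑' n, (aa n : ℂ) * w^n * (r:ℂ)^n)
        = (1 - (r:ℂ) * w)⁻¹ := by
    intro w hw
    have hsw : Summable (fun n => ‖(aa n : ℂ) * w^n * (r:ℂ)^n‖) := by
      apply Summable.of_nonneg_of_le (fun n => norm_nonneg _) (hnorm w hw)
      exact summable_geometric_of_lt_one (abs_nonneg r) hr
    rw [tsum_mul_tsum_eq_tsum_sum_range_of_summable_norm hsw hsw]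
    have hterm : ∀ n : ℕ, (∑ k ∈ range (n+1),
        ((aa k : ℂ) * w^k * (r:ℂ)^k) * ((aa (n-k) : ℂ) * w^(n-k) * (r:ℂ)^(n-k)))
        = ((r:ℂ) * w)^n := by
      intro n
      have : ∀ k ∈ range (n+1),
          ((aa k : ℂ) * w^k * (r:ℂ)^k) * ((aa (n-k) : ℂ) * w^(n-k) * (r:ℂ)^(n-k))
          = ((aa k * aa (n-k) : ℝ) : ℂ) * ((r:ℂ) * w)^n := by
        intro k hk
        simp only [mem_range] at hk
        have hkn : k + (n - k) = n := by omega
        rw [mul_pow, show w^n = w^k * w^(n-k) by rw [← pow_add, hkn],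
          show ((r:ℂ))^n = (r:ℂ)^k * (r:ℂ)^(n-k) by rw [← pow_add, hkn]]
        push_cast
        ring
      rw [Finset.sum_congr rfl this, ← Finset.sum_mul, ← Complex.ofReal_sum,
        aa_vandermonde n]
      simp
    have hrw : ‖(r:ℂ) * w‖ < 1 := by
      rw [norm_mul, hw, mul_one, Complex.norm_real, Real.norm_eq_abs]
      exact hr
    rw [tsum_congr hterm, tsum_geometric_of_norm_lt_one hrw]
  have hFF : F * F = (1 - (r:ℂ) * u)⁻¹ := cauchy_sq u habs
  have hGG : G * G = (1 - (r:ℂ) * v)⁻¹ := cauchy_sq v hvabs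
  -- G = conj F
  have hGF : G = (starRingEnd ℂ) F := by
    rw [hF, hG]
    have hst : (starRingEnd ℂ) (∑' n, f n) = ∑' n, star (f n) := tsum_star
    rw [hst]
    apply tsum_congr
    intro n
    show (aa n : ℂ) * v^n * (r:ℂ)^n = star ((aa n : ℂ) * u^n * (r:ℂ)^n)
    rw [star_mul', star_mul', star_pow, star_pow,
      show star ((aa n : ℝ) : ℂ) = ((aa n:ℝ):ℂ) from Complex.conj_ofReal _,
      show star ((r : ℝ) : ℂ) = ((r:ℝ):ℂ) from Complex.conj_ofReal _,
      show star u = v from rfl]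
  -- the Cauchy product F * G
  have hcauchyFG : HasSum (fun n => ((legendreP n x * r^n : ℝ) : ℂ)) (F * G) := by
    have hsumm := (summable_norm_sum_mul_range_of_summable_norm hsummf hsummg).of_norm
    have heq := tsum_mul_tsum_eq_tsum_sum_range_of_summable_norm hsummf hsummg
    have hterm : ∀ n : ℕ, (∑ k ∈ range (n+1), f k * g (n-k))
        = ((legendreP n x * r^n : ℝ) : ℂ) := by
      intro n
      have h1 : ∀ k ∈ range (n+1), f k * g (n-k)
          = ((aa k * aa (n-k) : ℝ) : ℂ) * u^k * v^(n-k) * (r:ℂ)^n := by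
        intro k hk
        simp only [mem_range] at hk
        have hkn : k + (n - k) = n := by omega
        simp only [hf, hg]
        rw [show ((r:ℂ))^n = (r:ℂ)^k * (r:ℂ)^(n-k) by rw [← pow_add, hkn]]
        push_cast
        ring
      rw [Finset.sum_congr rfl h1]
      have h2 : ∑ k ∈ range (n+1), ((aa k * aa (n-k) : ℝ) : ℂ) * u^k * v^(n-k) * (r:ℂ)^n
          = CC x n * (r:ℂ)^n := by
        rw [CC, Finset.sum_mul]
      rw [h2, CC_eq_legendre x hx n]
      push_cast
      ring
    have h3 : HasSum (fun n => ((legendreP n x * r^n : ℝ):ℂ))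
        (∑' n, ∑ k ∈ range (n+1), f k * g (n-k)) := (funext hterm) ▸ hsumm.hasSum
    rw [← heq] at h3
    exact h3
  -- algebra: (1 - ru)(1 - rv) = Δ
  have huv : u * v = 1 := uu_mul_conj x hx
  have hsumuv : u + v = 2 * (x:ℂ) := uu_add_conj x hx
  set Δ : ℝ := 1 - 2*x*r + r^2 with hΔ
  have halg : (1 - (r:ℂ)*u) * (1 - (r:ℂ)*v) = (Δ:ℂ) := by
    have : (1 - (r:ℂ)*u) * (1 - (r:ℂ)*v) = 1 - (r:ℂ)*(u+v) + (r:ℂ)^2*(u*v) := by ring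
    rw [this, huv, hsumuv, hΔ]
    push_cast
    ring
  have h1ru : (1 - (r:ℂ)*u) ≠ 0 := by
    intro h
    have : ‖(1:ℂ)‖ ≤ ‖(r:ℂ)*u‖ := by
      have : (1:ℂ) = (r:ℂ)*u := by linear_combination h
      rw [← this]
    rw [norm_one] at this
    linarith
  have h1rv : (1 - (r:ℂ)*v) ≠ 0 := by
    intro h
    have : ‖(1:ℂ)‖ ≤ ‖(r:ℂ)*v‖ := by
      have : (1:ℂ) = (r:ℂ)*v := by linear_combination h
      rw [← this]
    rw [norm_one] at this
    linarith
  have hΔpos : 0 < Δ := by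
    have h1 : (1 - (r:ℂ)*v) = (starRingEnd ℂ) (1 - (r:ℂ)*u) := by
      rw [map_sub, map_mul, map_one, Complex.conj_ofReal]
    have h2 : ((Complex.normSq (1 - (r:ℂ)*u) : ℝ) : ℂ) = (Δ:ℂ) := by
      rw [← Complex.mul_conj, ← h1, halg]
    have h3 : Complex.normSq (1 - (r:ℂ)*u) = Δ := by exact_mod_cast h2
    rw [← h3]
    exact Complex.normSq_pos.mpr h1ru
  -- (F*G)^2 = Δ⁻¹
  have hsq : (F*G)*(F*G) = ((Δ⁻¹ : ℝ) : ℂ) := by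
    have : (F*G)*(F*G) = (F*F)*(G*G) := by ring
    rw [this, hFF, hGG, ← mul_inv, halg]
    push_cast
    ring
  have hFGreal : F * G = ((Complex.normSq F : ℝ) : ℂ) := by
    rw [hGF, Complex.mul_conj]
  set c : ℝ := Complex.normSq F with hc
  have hc2 : c^2 = Δ⁻¹ := by
    have : ((c^2 : ℝ) : ℂ) = ((Δ⁻¹ : ℝ) : ℂ) := by
      rw [← hsq, hFGreal]
      push_cast
      ring
    exact_mod_cast this
  have hcval : c = 1 / Real.sqrt Δ := by
    have h0 : 0 ≤ c := Complex.normSq_nonneg F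
    have : Real.sqrt (c^2) = Real.sqrt Δ⁻¹ := by rw [hc2]
    rw [Real.sqrt_sq h0, Real.sqrt_inv] at this
    rw [this, one_div]
  have hfinal : F * G = ((1 / Real.sqrt Δ : ℝ) : ℂ) := by
    rw [hFGreal, hcval]
  rw [hfinal] at hcauchyFG
  exact Complex.hasSum_ofReal.mp hcauchyFG


theorem perturbing_function_legendre_expansion
    (m₀ m₁ m₂ : ℝ) (hm₀ : 0 < m₀) (hm₁ : 0 < m₁) (hm₂ : 0 < m₂)
    (σ₀ σ₁ μ₁ : ℝ)
    (hσ₀ : σ₀ = m₀ / (m₀ + m₁)) (hσ₁ : σ₁ = m₁ / (m₀ + m₁))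
    (hμ₁ : μ₁ = m₀ * m₁ / (m₀ + m₁))
    (Q₁ Q₂ : EuclideanSpace ℝ (Fin 3))
    (hQ₂ : Q₂ ≠ 0) (h₀ : Q₂ - σ₀ • Q₁ ≠ 0) (h₁ : Q₂ + σ₁ • Q₁ ≠ 0)
    (hratio : ‖Q₁‖ / ‖Q₂‖ < min (1 / (2 * σ₀)) (1 / (2 * σ₁)))
    (ζ : ℝ) (hζ : Real.cos ζ = (inner ℝ Q₁ Q₂ : ℝ) / (‖Q₁‖ * ‖Q₂‖)) :
    HasSum (fun n : ℕ =>
      -(μ₁ * m₂) * ((σ₀ ^ (n + 2 - 1) + (-1 : ℝ) ^ (n + 2) * σ₁ ^ (n + 2 - 1)) *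
        legendreP (n + 2) (Real.cos ζ) * ‖Q₁‖ ^ (n + 2) / ‖Q₂‖ ^ (n + 2 + 1)))
      (-(μ₁ * m₂) *
        ((1 / σ₀) * (1 / ‖Q₂ - σ₀ • Q₁‖ - 1 / ‖Q₂‖) +
         (1 / σ₁) * (1 / ‖Q₂ + σ₁ • Q₁‖ - 1 / ‖Q₂‖))) := by
  have hM : 0 < m₀ + m₁ := by linarith
  have hσ₀pos : 0 < σ₀ := by rw [hσ₀]; positivity
  have hσ₁pos : 0 < σ₁ := by rw [hσ₁]; positivity
  set x : ℝ := Real.cos ζ with hxdef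
  have hx : |x| ≤ 1 := Real.abs_cos_le_one ζ
  have hQ₂pos : (0:ℝ) < ‖Q₂‖ := norm_pos_iff.mpr hQ₂
  have hQ₂ne : ‖Q₂‖ ≠ 0 := ne_of_gt hQ₂pos
  set ρ : ℝ := ‖Q₁‖ / ‖Q₂‖ with hρdef
  have hρ0 : 0 ≤ ρ := by positivity
  have hinner : (inner ℝ Q₁ Q₂ : ℝ) = x * ρ * ‖Q₂‖^2 := by
    rcases eq_or_ne ‖Q₁‖ 0 with h|h
    · have hQ₁0 : Q₁ = 0 := norm_eq_zero.mp h
      rw [hρdef, h]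
      simp [hQ₁0]
    · rw [hζ, hρdef]
      field_simp
  have key : ∀ t : ℝ, ‖Q₂ - t • Q₁‖
      = ‖Q₂‖ * Real.sqrt (1 - 2*x*(t*ρ) + (t*ρ)^2) := by
    intro t
    have habs := abs_le.mp hx
    have hΔ0 : 0 ≤ 1 - 2*x*(t*ρ) + (t*ρ)^2 := by
      nlinarith [mul_nonneg (by linarith : (0:ℝ) ≤ 1 - x) (sq_nonneg (1 + t*ρ)),
        mul_nonneg (by linarith : (0:ℝ) ≤ 1 + x) (sq_nonneg (1 - t*ρ))]
    have hsq : ‖Q₂ - t • Q₁‖^2 = (‖Q₂‖ * Real.sqrt (1 - 2*x*(t*ρ) + (t*ρ)^2))^2 := by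
      rw [mul_pow, Real.sq_sqrt hΔ0]
      rw [norm_sub_sq_real]
      rw [real_inner_smul_right, norm_smul]
      rw [real_inner_comm, hinner]
      rw [hρdef]
      have hn1 : ‖Q₁‖ = (‖Q₁‖/‖Q₂‖) * ‖Q₂‖ := by field_simp
      rw [Real.norm_eq_abs, mul_pow, _root_.sq_abs]
      calc ‖Q₂‖^2 - 2 * (t * (x * (‖Q₁‖/‖Q₂‖) * ‖Q₂‖^2)) + t^2 * ‖Q₁‖^2
          = ‖Q₂‖^2 - 2 * (t * (x * (‖Q₁‖/‖Q₂‖) * ‖Q₂‖^2)) + t^2 * ((‖Q₁‖/‖Q₂‖) * ‖Q₂‖)^2 := by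
            rw [← hn1]
        _ = ‖Q₂‖ ^ 2 * (1 - 2 * x * (t * (‖Q₁‖/‖Q₂‖)) + (t * (‖Q₁‖/‖Q₂‖)) ^ 2) := by ring
    have h1 : ‖Q₂ - t • Q₁‖ = Real.sqrt (‖Q₂ - t • Q₁‖^2) := (Real.sqrt_sq (norm_nonneg _)).symm
    rw [h1, hsq, Real.sqrt_sq (by positivity)]
  -- radii
  have hr₀ : |σ₀ * ρ| < 1 := by
    have h2 : ρ < 1/(2*σ₀) := lt_of_lt_of_le hratio (min_le_left _ _)
    rw [_root_.abs_of_nonneg (by positivity : (0:ℝ) ≤ σ₀ * ρ)]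
    calc σ₀ * ρ < σ₀ * (1/(2*σ₀)) := mul_lt_mul_of_pos_left h2 hσ₀pos
      _ = 1/2 := by field_simp
      _ < 1 := by norm_num
  have hr₁ : |(-σ₁) * ρ| < 1 := by
    have h2 : ρ < 1/(2*σ₁) := lt_of_lt_of_le hratio (min_le_right _ _)
    rw [abs_mul, abs_neg, _root_.abs_of_nonneg (le_of_lt hσ₁pos), _root_.abs_of_nonneg hρ0]
    calc σ₁ * ρ < σ₁ * (1/(2*σ₁)) := mul_lt_mul_of_pos_left h2 hσ₁pos
      _ = 1/2 := by field_simp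
      _ < 1 := by norm_num
  have hD₀pos : (0:ℝ) < ‖Q₂ - σ₀ • Q₁‖ := norm_pos_iff.mpr h₀
  have hD₁pos : (0:ℝ) < ‖Q₂ + σ₁ • Q₁‖ := norm_pos_iff.mpr h₁
  -- the two sums
  have hsum₀ : HasSum (fun n => legendreP n x * (σ₀*ρ)^n) (‖Q₂‖ * (1/‖Q₂ - σ₀ • Q₁‖)) := by
    have h := legendre_hasSum x (σ₀*ρ) hx hr₀
    have hk := key σ₀
    have hsqrtne : Real.sqrt (1 - 2*x*(σ₀*ρ) + (σ₀*ρ)^2) ≠ 0 := by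
      intro hz
      rw [hz, mul_zero] at hk
      exact ne_of_gt hD₀pos hk
    have : 1 / Real.sqrt (1 - 2*x*(σ₀*ρ) + (σ₀*ρ)^2) = ‖Q₂‖ * (1/‖Q₂ - σ₀ • Q₁‖) := by
      rw [hk, one_div (‖Q₂‖ * _), mul_inv, mul_inv_cancel_left₀ hQ₂ne, one_div]
    rwa [this] at h
  have hsum₁ : HasSum (fun n => legendreP n x * ((-σ₁)*ρ)^n) (‖Q₂‖ * (1/‖Q₂ + σ₁ • Q₁‖)) := by
    have h := legendre_hasSum x ((-σ₁)*ρ) hx hr₁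
    have hk := key (-σ₁)
    rw [show Q₂ - (-σ₁) • Q₁ = Q₂ + σ₁ • Q₁ by rw [neg_smul, sub_neg_eq_add]] at hk
    have hsqrtne : Real.sqrt (1 - 2*x*((-σ₁)*ρ) + ((-σ₁)*ρ)^2) ≠ 0 := by
      intro hz
      rw [hz, mul_zero] at hk
      exact ne_of_gt hD₁pos hk
    have : 1 / Real.sqrt (1 - 2*x*((-σ₁)*ρ) + ((-σ₁)*ρ)^2) = ‖Q₂‖ * (1/‖Q₂ + σ₁ • Q₁‖) := by
      rw [hk, one_div (‖Q₂‖ * _), mul_inv, mul_inv_cancel_left₀ hQ₂ne, one_div]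
    rwa [this] at h
  have hleg0 : ∀ y : ℝ, legendreP 0 y = 1 := fun y => rfl
  have hleg1 : ∀ y : ℝ, legendreP 1 y = y := fun y => rfl
  set D₀ : ℝ := ‖Q₂ - σ₀ • Q₁‖ with hD₀def
  set D₁ : ℝ := ‖Q₂ + σ₁ • Q₁‖ with hD₁def
  have hD₀ne : D₀ ≠ 0 := ne_of_gt hD₀pos
  have hD₁ne : D₁ ≠ 0 := ne_of_gt hD₁pos
  have hSsum : HasSum (fun n => σ₀⁻¹ * ‖Q₂‖⁻¹ * (legendreP n x * (σ₀*ρ)^n)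
      + σ₁⁻¹ * ‖Q₂‖⁻¹ * (legendreP n x * ((-σ₁)*ρ)^n))
      (σ₀⁻¹ * ‖Q₂‖⁻¹ * (‖Q₂‖ * (1/D₀)) + σ₁⁻¹ * ‖Q₂‖⁻¹ * (‖Q₂‖ * (1/D₁))) :=
    (hsum₀.mul_left _).add (hsum₁.mul_left _)
  have hshift : HasSum (fun n => σ₀⁻¹ * ‖Q₂‖⁻¹ * (legendreP (n+2) x * (σ₀*ρ)^(n+2))
      + σ₁⁻¹ * ‖Q₂‖⁻¹ * (legendreP (n+2) x * ((-σ₁)*ρ)^(n+2)))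
      ((σ₀⁻¹ * ‖Q₂‖⁻¹ * (‖Q₂‖ * (1/D₀)) + σ₁⁻¹ * ‖Q₂‖⁻¹ * (‖Q₂‖ * (1/D₁)))
        - (σ₀⁻¹ * ‖Q₂‖⁻¹ * (legendreP 0 x * (σ₀*ρ)^0)
            + σ₁⁻¹ * ‖Q₂‖⁻¹ * (legendreP 0 x * ((-σ₁)*ρ)^0))
        - (σ₀⁻¹ * ‖Q₂‖⁻¹ * (legendreP 1 x * (σ₀*ρ)^1)
            + σ₁⁻¹ * ‖Q₂‖⁻¹ * (legendreP 1 x * ((-σ₁)*ρ)^1))) := by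
    apply (hasSum_nat_add_iff (f := fun n => σ₀⁻¹ * ‖Q₂‖⁻¹ * (legendreP n x * (σ₀*ρ)^n)
      + σ₁⁻¹ * ‖Q₂‖⁻¹ * (legendreP n x * ((-σ₁)*ρ)^n)) 2).2
    rw [Finset.sum_range_succ, Finset.sum_range_one]
    convert hSsum using 1
    · rfl
    ring
  have hfinal := hshift.mul_left (-(μ₁ * m₂))
  have hfun : ∀ n : ℕ,
      -(μ₁ * m₂) * ((σ₀ ^ (n + 2 - 1) + (-1 : ℝ) ^ (n + 2) * σ₁ ^ (n + 2 - 1)) *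
        legendreP (n + 2) (Real.cos ζ) * ‖Q₁‖ ^ (n + 2) / ‖Q₂‖ ^ (n + 2 + 1))
      = -(μ₁ * m₂) * (σ₀⁻¹ * ‖Q₂‖⁻¹ * (legendreP (n+2) x * (σ₀*ρ)^(n+2))
          + σ₁⁻¹ * ‖Q₂‖⁻¹ * (legendreP (n+2) x * ((-σ₁)*ρ)^(n+2))) := by
    intro n
    rw [show n + 2 - 1 = n + 1 from rfl, ← hxdef]
    rw [mul_pow, mul_pow, hρdef, div_pow, neg_pow σ₁ (n+2)]
    have hQ₂pne : ‖Q₂‖^(n+2) ≠ 0 := by positivity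
    have hσ₀ne : σ₀ ≠ 0 := ne_of_gt hσ₀pos
    have hσ₁ne : σ₁ ≠ 0 := ne_of_gt hσ₁pos
    field_simp
    ring
  have hval : -(μ₁ * m₂) *
      ((1 / σ₀) * (1 / D₀ - 1 / ‖Q₂‖) + (1 / σ₁) * (1 / D₁ - 1 / ‖Q₂‖))
      = -(μ₁ * m₂) *
      ((σ₀⁻¹ * ‖Q₂‖⁻¹ * (‖Q₂‖ * (1/D₀)) + σ₁⁻¹ * ‖Q₂‖⁻¹ * (‖Q₂‖ * (1/D₁)))
        - (σ₀⁻¹ * ‖Q₂‖⁻¹ * (legendreP 0 x * (σ₀*ρ)^0)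
            + σ₁⁻¹ * ‖Q₂‖⁻¹ * (legendreP 0 x * ((-σ₁)*ρ)^0))
        - (σ₀⁻¹ * ‖Q₂‖⁻¹ * (legendreP 1 x * (σ₀*ρ)^1)
            + σ₁⁻¹ * ‖Q₂‖⁻¹ * (legendreP 1 x * ((-σ₁)*ρ)^1))) := by
    rw [hleg0, hleg1]
    have hσ₀ne : σ₀ ≠ 0 := ne_of_gt hσ₀pos
    have hσ₁ne : σ₁ ≠ 0 := ne_of_gt hσ₁pos
    field_simp
    ring
  rw [funext hfun, hval]
  exact hfinal
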